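/- Let δ be a dissimilarity map on {1,…,n} that satisfies the strict Kalmanson conditions with respect to the identity circular ordering, i.e., for all i < j < k < l: δ(i,j) + δ(k,l) < δ(i,k) + δ(j,l) and δ(i,l) + δ(j,k) < δ(i,k) + δ(j,l) (this is the genericity condition for a circular decomposable metric). Let σ be a permutation of {1,…,n} whose associated circular ordering (σ(1), σ(2), …, σ(n)) is not equal to the identity circular ordering (1,2,…,n) up to rotation and reflection of the cycle. Then the tour length of σ strictly exceeds that of the identity: Σ_{i=1}^n δ(σ(i), σ(i+1)) > Σ_{i=1}^n δ(i, i+1), where indices are taken cyclically (σ(n+1) = σ(1) and n+1 is identified with 1). -/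

import Mathlib

/-- A dissimilarity map on `{1,…,n}` (modeled as `Fin n`): symmetric,
nonnegative, and zero on the diagonal. -/
def IsDissimilarity {n : ℕ} (δ : Fin n → Fin n → ℝ) : Prop :=
  (∀ i j, δ i j = δ j i) ∧ (∀ i j, 0 ≤ δ i j) ∧ (∀ i, δ i i = 0)

/-- The strict Kalmanson conditions with respect to the identity circular
ordering (the genericity condition for a circular decomposable metric). -/
def StrictKalmanson {n : ℕ} (δ : Fin n → Fin n → ℝ) : Prop :=
  ∀ i j k l : Fin n, i < j → j < k → k < l →
    δ i j + δ k l < δ i k + δ j l ∧ δ i l + δ j k < δ i k + δ j l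

/-- The circular ordering `(σ(1),…,σ(n))` coincides with the identity circular
ordering `(1,…,n)` up to rotation and reflection of the cycle. -/
def DihedrallyIdentity {n : ℕ} [NeZero n] (σ : Equiv.Perm (Fin n)) : Prop :=
  ∃ c : Fin n, (∀ k : Fin n, σ k = k + c) ∨ (∀ k : Fin n, σ k = c - k)

section KalmansonAux

open Fin.CommRing

variable {n : ℕ} [NeZero n]

noncomputable def tL (δ : Fin n → Fin n → ℝ) (f : Fin n → Fin n) : ℝ :=
  ∑ i : Fin n, δ (f i) (f (i + 1))

lemma tL_rot (δ : Fin n → Fin n → ℝ) (f : Fin n → Fin n) (p : Fin n) :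
    tL δ (fun u => f (p + u)) = tL δ f := by
  unfold tL
  refine Fintype.sum_equiv (Equiv.addLeft p) _ _ (fun u => ?_)
  simp [Equiv.coe_addLeft, add_assoc]

lemma tL_dihedral (δ : Fin n → Fin n → ℝ) (hsym : ∀ i j, δ i j = δ j i)
    (ν : Equiv.Perm (Fin n)) (h : DihedrallyIdentity ν) :
    tL δ ⇑ν = ∑ i : Fin n, δ i (i + 1) := by
  obtain ⟨c, h | h⟩ := h
  · unfold tL
    refine Fintype.sum_equiv (Equiv.addRight c) _ _ (fun k => ?_)
    simp only [h, Equiv.coe_addRight]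
    ring_nf
  · unfold tL
    refine Fintype.sum_equiv (Equiv.subLeft (c - 1)) _ _ (fun k => ?_)
    simp only [h, Equiv.subLeft_apply]
    rw [hsym]
    congr 1 <;> ring


lemma dihedral_small (hn : n ≤ 2) (σ : Equiv.Perm (Fin n)) :
    DihedrallyIdentity σ := by
  have hpos := Nat.pos_of_ne_zero (NeZero.ne n)
  have h12 : n = 1 ∨ n = 2 := by omega
  rcases h12 with rfl | rfl
  · exact ⟨σ 0, Or.inl fun k => Subsingleton.elim _ _⟩
  · refine ⟨σ 0, Or.inl ?_⟩
    have key : ∀ x y z : Fin 2, x ≠ z → y ≠ z → x = y := by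
      intro x y z hx hy
      have hx' : x.val ≠ z.val := fun h => hx (Fin.ext h)
      have hy' : y.val ≠ z.val := fun h => hy (Fin.ext h)
      have := x.isLt; have := y.isLt; have := z.isLt
      exact Fin.ext (by omega)
    rw [Fin.forall_fin_two]
    constructor
    · simp
    · have hne : σ 1 ≠ σ 0 := σ.injective.ne one_ne_zero
      refine key _ _ (σ 0) hne fun h => ?_
      have : (1 : Fin 2) + σ 0 = 0 + σ 0 := by rw [zero_add]; exact h
      exact one_ne_zero (add_right_cancel this)

lemma dihedral_of_steps (σ : Equiv.Perm (Fin n))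
    (h : ∀ u : Fin n, σ (u + 1) = σ u + 1 ∨ σ (u + 1) = σ u - 1) :
    DihedrallyIdentity σ := by
  have hpos := Nat.pos_of_ne_zero (NeZero.ne n)
  by_cases hn : n ≤ 2
  · exact dihedral_small hn σ
  push_neg at hn
  have h20 : ((1 : Fin n) + 1) ≠ 0 := by
    intro hc
    have hv := congrArg Fin.val hc
    rw [Fin.add_def, Fin.val_one'] at hv
    simp at hv
    rw [Nat.mod_eq_of_lt (show 2 < n by omega)] at hv
    omega
  rcases h 0 with h0 | h0
  · -- all steps +1
    have hstep : ∀ j : ℕ, σ ((j : Fin n) + 1) = σ (j : Fin n) + 1 := by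
      intro j
      induction j with
      | zero => simpa using h0
      | succ j ih =>
        rcases h ((j : Fin n) + 1) with h' | h'
        · rw [Nat.cast_add_one]; exact h'
        · exfalso
          rw [ih] at h'
          have : σ ((j:Fin n) + 1 + 1) = σ (j : Fin n) := by rw [h']; ring_nf
          have h2 := σ.injective this
          have : ((1:Fin n) + 1) = 0 := by
            have := congrArg (fun x => x - (j : Fin n)) h2
            simpa [add_assoc, add_comm, add_left_comm, sub_eq_iff_eq_add] using this
          exact h20 this
    have hall : ∀ j : ℕ, σ (j : Fin n) = σ 0 + (j : Fin n) := by
      intro j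
      induction j with
      | zero => simp
      | succ j ih => rw [Nat.cast_add_one, hstep j, ih]; ring
    refine ⟨σ 0, Or.inl fun k => ?_⟩
    have := hall k.val
    rw [Fin.cast_val_eq_self] at this
    rw [this]; ring
  · -- all steps -1
    have hstep : ∀ j : ℕ, σ ((j : Fin n) + 1) = σ (j : Fin n) - 1 := by
      intro j
      induction j with
      | zero => simpa using h0
      | succ j ih =>
        rcases h ((j : Fin n) + 1) with h' | h'
        · exfalso
          rw [ih] at h'
          have : σ ((j:Fin n) + 1 + 1) = σ (j : Fin n) := by rw [h']; ring_nf
          have h2 := σ.injective this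
          have : ((1:Fin n) + 1) = 0 := by
            have := congrArg (fun x => x - (j : Fin n)) h2
            simpa [add_assoc, add_comm, add_left_comm, sub_eq_iff_eq_add] using this
          exact h20 this
        · rw [Nat.cast_add_one]; exact h'
    have hall : ∀ j : ℕ, σ (j : Fin n) = σ 0 - (j : Fin n) := by
      intro j
      induction j with
      | zero => simp
      | succ j ih => rw [Nat.cast_add_one, hstep j, ih]; ring
    refine ⟨σ 0, Or.inr fun k => ?_⟩
    have := hall k.val
    rw [Fin.cast_val_eq_self] at this
    exact this

lemma surgery (δ : Fin n → Fin n → ℝ) (hsym : ∀ i j, δ i j = δ j i)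
    (τ : Equiv.Perm (Fin n)) (m : ℕ) (hm2 : 2 ≤ m) (hmn : m ≤ n - 2)
    (hlt : δ (τ 0) (τ (m : Fin n)) + δ (τ 1) (τ ((m + 1 : ℕ) : Fin n))
      < δ (τ 0) (τ 1) + δ (τ (m : Fin n)) (τ ((m + 1 : ℕ) : Fin n))) :
    ∃ σ' : Equiv.Perm (Fin n), tL δ ⇑σ' < tL δ ⇑τ := by
  have hn4 : 4 ≤ n := by omega
  have hmln : m < n := by omega
  -- the reversal of positions 1..m
  set rf : Fin n → Fin n := fun u =>
    if h : 1 ≤ u.val ∧ u.val ≤ m then ⟨m + 1 - u.val, by omega⟩ else u with hrf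
  have hrf_in : ∀ j : ℕ, 1 ≤ j → j ≤ m → rf ((j : Fin n)) = ((m + 1 - j : ℕ) : Fin n) := by
    intro j h1 h2
    have hv : ((j : Fin n)).val = j := Fin.val_cast_of_lt (by omega)
    rw [hrf]
    simp only
    rw [dif_pos (by rw [hv]; exact ⟨h1, h2⟩)]
    apply Fin.ext
    show m + 1 - ((j : Fin n)).val = ((m + 1 - j : ℕ) : Fin n).val
    rw [hv, Fin.val_cast_of_lt (by omega)]
  have hrf_fix : ∀ v : Fin n, (v.val = 0 ∨ m < v.val) → rf v = v := by
    intro v hv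
    rw [hrf]
    simp only
    rw [dif_neg (by omega)]
  have hinv : Function.Involutive rf := by
    intro u
    by_cases h : 1 ≤ u.val ∧ u.val ≤ m
    · have e1 : rf u = ((m + 1 - u.val : ℕ) : Fin n) := by
        have := hrf_in u.val h.1 h.2
        rwa [Fin.cast_val_eq_self] at this
      rw [e1, hrf_in (m + 1 - u.val) (by omega) (by omega)]
      have : m + 1 - (m + 1 - u.val) = u.val := by omega
      rw [this, Fin.cast_val_eq_self]
    · rw [hrf_fix u (by omega), hrf_fix u (by omega)]
  set σ' : Equiv.Perm (Fin n) := (Function.Involutive.toPerm rf hinv).trans τ with hσ'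
  refine ⟨σ', ?_⟩
  have happ : ∀ v : Fin n, σ' v = τ (rf v) := fun v => rfl
  -- sums over range n
  set F : ℕ → ℝ := fun j => δ (τ ((j : Fin n))) (τ ((j : Fin n) + 1)) with hF
  set G : ℕ → ℝ := fun j => δ (τ (rf ((j : Fin n)))) (τ (rf ((j : Fin n) + 1))) with hG
  have hτsum : tL δ ⇑τ = ∑ j ∈ Finset.range n, F j := by
    rw [← Fin.sum_univ_eq_sum_range F n]
    unfold tL
    refine Finset.sum_congr rfl fun i _ => ?_
    rw [hF]; simp only [Fin.cast_val_eq_self]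
  have hσsum : tL δ ⇑σ' = ∑ j ∈ Finset.range n, G j := by
    rw [← Fin.sum_univ_eq_sum_range G n]
    unfold tL
    refine Finset.sum_congr rfl fun i _ => ?_
    rw [hG]; simp only [Fin.cast_val_eq_self, happ]
  -- splitting
  have split : ∀ H : ℕ → ℝ, ∑ j ∈ Finset.range n, H j
      = H 0 + (∑ j ∈ Finset.Ico 1 m, H j) + H m + ∑ j ∈ Finset.Ico (m + 1) n, H j := by
    intro H
    rw [Finset.range_eq_Ico]
    rw [← Finset.sum_Ico_consecutive H (show 0 ≤ m + 1 by omega) (show m + 1 ≤ n by omega)]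
    rw [← Finset.sum_Ico_consecutive H (show 0 ≤ m by omega) (show m ≤ m + 1 by omega)]
    rw [← Finset.sum_Ico_consecutive H (show 0 ≤ 1 by omega) (show 1 ≤ m by omega)]
    have e0 : Finset.Ico 0 1 = {0} := rfl
    have em : Finset.Ico m (m + 1) = {m} := by
      ext x; simp only [Finset.mem_Ico, Finset.mem_singleton]; omega
    rw [e0, em, Finset.sum_singleton, Finset.sum_singleton]
  -- middle segment reindexing
  have hmid : ∑ j ∈ Finset.Ico 1 m, G j = ∑ j ∈ Finset.Ico 1 m, F j := by
    refine Finset.sum_nbij' (fun j => m - j) (fun j => m - j) ?_ ?_ ?_ ?_ ?_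
    · intro a ha; simp only [Finset.mem_Ico] at ha ⊢; omega
    · intro a ha; simp only [Finset.mem_Ico] at ha ⊢; omega
    · intro a ha; simp only [Finset.mem_Ico] at ha; omega
    · intro a ha; simp only [Finset.mem_Ico] at ha; omega
    · intro j hj
      rw [Finset.mem_Ico] at hj
      obtain ⟨hj1, hj2⟩ := hj
      rw [hG, hF]
      simp only
      rw [show ((j : Fin n) + 1) = ((j + 1 : ℕ) : Fin n) by push_cast; ring]
      rw [hrf_in j hj1 (by omega), hrf_in (j + 1) (by omega) (by omega)]
      rw [show ((m - j : ℕ) : Fin n) + 1 = ((m - j + 1 : ℕ) : Fin n) by push_cast; ring]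
      rw [show m + 1 - (j + 1) = m - j by omega, show m - j + 1 = m + 1 - j by omega]
      exact hsym _ _
  -- tail segment
  have htail : ∀ j ∈ Finset.Ico (m + 1) n, G j = F j := by
    intro j hj
    rw [Finset.mem_Ico] at hj
    rw [hG, hF]
    simp only
    have hfix2 : rf ((j : Fin n) + 1) = (j : Fin n) + 1 := by
      apply hrf_fix
      rw [show ((j : Fin n) + 1) = ((j + 1 : ℕ) : Fin n) by push_cast; ring, Fin.val_natCast]
      rcases Nat.lt_or_ge (j + 1) n with h | h
      · rw [Nat.mod_eq_of_lt h]; omega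
      · have hje : j + 1 = n := by omega
        rw [hje, Nat.mod_self]; omega
    rw [hrf_fix ((j : Fin n)) (Or.inr (by rw [Fin.val_cast_of_lt hj.2]; omega)), hfix2]
  have hG0 : G 0 = δ (τ 0) (τ ((m : ℕ) : Fin n)) := by
    rw [hG]
    simp only [Nat.cast_zero, zero_add]
    rw [hrf_fix 0 (Or.inl rfl)]
    rw [show (1 : Fin n) = ((1 : ℕ) : Fin n) by push_cast; ring]
    rw [hrf_in 1 le_rfl (by omega), show m + 1 - 1 = m by omega]
  have hGm : G m = δ (τ 1) (τ ((m + 1 : ℕ) : Fin n)) := by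
    rw [hG]
    simp only
    rw [hrf_in m (by omega) le_rfl, show m + 1 - m = 1 by omega]
    rw [show ((m : Fin n) + 1) = ((m + 1 : ℕ) : Fin n) by push_cast; ring]
    rw [hrf_fix (((m + 1 : ℕ) : Fin n)) (Or.inr (by rw [Fin.val_cast_of_lt (by omega)]; omega))]
    norm_cast
  have hF0 : F 0 = δ (τ 0) (τ 1) := by
    rw [hF]; simp
  have hFm : F m = δ (τ ((m : ℕ) : Fin n)) (τ ((m + 1 : ℕ) : Fin n)) := by
    rw [hF]
    simp only
    rw [show ((m : Fin n) + 1) = ((m + 1 : ℕ) : Fin n) by push_cast; ring]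
  rw [hτsum, hσsum, split F, split G, hmid, Finset.sum_congr rfl htail, hG0, hGm, hF0, hFm]
  linarith

lemma exists_switch (P : ℕ → Prop) (N u₁ u₂ : ℕ) (h1a : 2 ≤ u₁) (h1b : u₁ ≤ N - 1)
    (h2a : 2 ≤ u₂) (h2b : u₂ ≤ N - 1) (hP1 : P u₁) (hP2 : ¬ P u₂) :
    ∃ q, 2 ≤ q ∧ q ≤ N - 2 ∧ ((P q ∧ ¬ P (q + 1)) ∨ (¬ P q ∧ P (q + 1))) := by
  by_contra hc
  have hiff : ∀ q, 2 ≤ q → q ≤ N - 2 → (P q ↔ P (q + 1)) := by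
    intro q hq1 hq2
    by_cases hq : P q <;> by_cases hq' : P (q + 1)
    · tauto
    · exact absurd ⟨q, hq1, hq2, Or.inl ⟨hq, hq'⟩⟩ hc
    · exact absurd ⟨q, hq1, hq2, Or.inr ⟨hq, hq'⟩⟩ hc
    · tauto
  have hN : 3 ≤ N := by omega
  have hconst : ∀ j, 2 ≤ j → j ≤ N - 1 → (P j ↔ P 2) := by
    intro j
    induction j with
    | zero => intro h _; omega
    | succ j ih =>
      intro hj1 hj2
      rcases Nat.lt_or_ge j 2 with hj | hj
      · have hj2' : j + 1 = 2 := by omega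
        rw [hj2']
      · rw [← hiff j hj (by omega)]
        exact ih (by omega) (by omega)
  have c1 := hconst u₁ h1a h1b
  have c2 := hconst u₂ h2a h2b
  tauto

lemma exists_better (δ : Fin n → Fin n → ℝ) (hsym : ∀ i j, δ i j = δ j i)
    (hK : StrictKalmanson δ) (σ : Equiv.Perm (Fin n)) (hσ : ¬ DihedrallyIdentity σ) :
    ∃ σ' : Equiv.Perm (Fin n), tL δ ⇑σ' < tL δ ⇑σ := by
  have hpos := Nat.pos_of_ne_zero (NeZero.ne n)
  by_cases hn : n ≤ 2
  · exact absurd (dihedral_small hn σ) hσ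
  push_neg at hn
  have h10 : (1 : Fin n).val = 1 := by
    rw [Fin.val_one']; exact Nat.mod_eq_of_lt (by omega)
  have h00 : (0 : Fin n).val = 0 := rfl
  have flt : ∀ (u v : Fin n), u.val < v.val → u < v := fun u v h => h
  -- find a bad step
  have hbad : ∃ p : Fin n, ¬(σ (p + 1) = σ p + 1 ∨ σ (p + 1) = σ p - 1) := by
    by_contra hc
    push_neg at hc
    refine hσ (dihedral_of_steps σ fun u => ?_)
    have := hc u
    tauto
  obtain ⟨p, hp⟩ := hbad
  push_neg at hp
  obtain ⟨hp1, hp2⟩ := hp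
  set τ : Equiv.Perm (Fin n) := (Equiv.addLeft p).trans σ with hτ
  have hτapp : ∀ u, τ u = σ (p + u) := fun u => rfl
  have hτσ : tL δ ⇑τ = tL δ ⇑σ := by
    have he : ⇑τ = fun u => σ (p + u) := rfl
    rw [he, tL_rot]
  set a := τ 0 with ha
  set b := τ 1 with hb
  have hab : a ≠ b := by
    rw [ha, hb]
    exact τ.injective.ne (by intro h; have := congrArg Fin.val h; rw [h00, h10] at this; omega)
  have hba1 : b ≠ a + 1 := by
    rw [ha, hb, hτapp, hτapp, add_zero]
    exact hp1
  have hab1 : a ≠ b + 1 := by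
    rw [ha, hb, hτapp, hτapp, add_zero]
    intro h
    apply hp2
    rw [h]; ring
  clear hp1 hp2
  set A := a.val with hA
  set B := b.val with hB
  have hAn := a.isLt
  have hBn := b.isLt
  have hABne : A ≠ B := fun h => hab (Fin.ext h)
  have hvadd : ∀ v : Fin n, (v + 1).val = (v.val + 1) % n := by
    intro v; rw [Fin.add_def, h10]
  have hBA : B ≠ (A + 1) % n := fun h => hba1 (Fin.ext (by rw [hvadd]; exact h))
  have hAB : A ≠ (B + 1) % n := fun h => hab1 (Fin.ext (by rw [hvadd]; exact h))
  have hmodA : (A + 1 = n ∧ (A + 1) % n = 0) ∨ (A + 1 < n ∧ (A + 1) % n = A + 1) := by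
    rcases Nat.lt_or_ge (A + 1) n with h | h
    · exact Or.inr ⟨h, Nat.mod_eq_of_lt h⟩
    · have : A + 1 = n := by omega
      exact Or.inl ⟨this, by rw [this, Nat.mod_self]⟩
  have hmodB : (B + 1 = n ∧ (B + 1) % n = 0) ∨ (B + 1 < n ∧ (B + 1) % n = B + 1) := by
    rcases Nat.lt_or_ge (B + 1) n with h | h
    · exact Or.inr ⟨h, Nat.mod_eq_of_lt h⟩
    · have : B + 1 = n := by omega
      exact Or.inl ⟨this, by rw [this, Nat.mod_self]⟩
  set lo := min A B with hlo
  set hi := max A B with hhi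
  have hlohi : lo + 2 ≤ hi ∧ hi + 2 ≤ lo + n ∧ hi < n ∧ (A = lo ∧ B = hi ∨ A = hi ∧ B = lo) := by
    omega
  clear hBA hAB hmodA hmodB
  obtain ⟨x, hxv⟩ : ∃ x : Fin n, x.val = lo + 1 := ⟨⟨lo + 1, by omega⟩, rfl⟩
  obtain ⟨y, hyv⟩ : ∃ y : Fin n, y.val < lo ∨ hi < y.val := by
    rcases Nat.eq_zero_or_pos lo with h | h
    · exact ⟨⟨n - 1, by omega⟩, Or.inr (by simp only; omega)⟩
    · exact ⟨⟨0, by omega⟩, Or.inl h⟩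
  have hpoint : ∀ v : Fin n, v.val ≠ A → v.val ≠ B →
      ∃ u : ℕ, 2 ≤ u ∧ u ≤ n - 1 ∧ τ ((u : ℕ) : Fin n) = v := by
    intro v hvA hvB
    refine ⟨(τ.symm v).val, ?_, by have := (τ.symm v).isLt; omega, ?_⟩
    · have hv0 : τ.symm v ≠ 0 := by
        intro h
        have hva : v = a := by rw [ha, ← h, Equiv.apply_symm_apply]
        exact hvA (congrArg Fin.val hva)
      have hv1 : τ.symm v ≠ 1 := by
        intro h
        have hvb : v = b := by rw [hb, ← h, Equiv.apply_symm_apply]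
        exact hvB (congrArg Fin.val hvb)
      have e0 : (τ.symm v).val ≠ 0 := fun h => hv0 (Fin.ext (by rw [h00]; exact h))
      have e1 : (τ.symm v).val ≠ 1 := fun h => hv1 (Fin.ext (by rw [h10]; exact h))
      omega
    · rw [Fin.cast_val_eq_self, Equiv.apply_symm_apply]
  obtain ⟨u₁, hu₁a, hu₁b, hu₁e⟩ := hpoint x (by omega) (by omega)
  obtain ⟨u₂, hu₂a, hu₂b, hu₂e⟩ := hpoint y (by omega) (by omega)
  have hfind := exists_switch
    (fun j => lo < (τ ((j : ℕ) : Fin n)).val ∧ (τ ((j : ℕ) : Fin n)).val < hi)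
    n u₁ u₂ hu₁a hu₁b hu₂a hu₂b
    (by rw [hu₁e]; omega)
    (by rw [hu₂e]; omega)
  obtain ⟨m, hm2, hmn2, hxor⟩ := hfind
  have hmln : m < n := by omega
  have hm1ln : m + 1 < n := by omega
  set w := τ ((m : ℕ) : Fin n) with hw
  set z := τ ((m + 1 : ℕ) : Fin n) with hz
  have hvm : (((m : ℕ)) : Fin n).val = m := Fin.val_cast_of_lt hmln
  have hvm1 : (((m + 1 : ℕ)) : Fin n).val = m + 1 := Fin.val_cast_of_lt hm1ln
  set W := w.val with hW
  set Z := z.val with hZ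
  have hWn := w.isLt
  have hZn := z.isLt
  -- distinctness
  have hidx : ∀ (u v : Fin n), u.val ≠ v.val → τ u ≠ τ v := by
    intro u v huv
    exact τ.injective.ne (fun h => huv (congrArg Fin.val h))
  have hWA : W ≠ A := fun h =>
    hidx _ 0 (by rw [hvm, h00]; omega) (by rw [← ha] at *; exact Fin.ext h)
  have hWB : W ≠ B := fun h =>
    hidx _ 1 (by rw [hvm, h10]; omega) (by rw [← hb] at *; exact Fin.ext h)
  have hZA : Z ≠ A := fun h =>
    hidx _ 0 (by rw [hvm1, h00]; omega) (by rw [← ha] at *; exact Fin.ext h)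
  have hZB : Z ≠ B := fun h =>
    hidx _ 1 (by rw [hvm1, h10]; omega) (by rw [← hb] at *; exact Fin.ext h)
  have hWZ : W ≠ Z := fun h =>
    hidx _ _ (by rw [hvm, hvm1]; omega) (Fin.ext h)
  -- sides
  have hsides : ((lo < W ∧ W < hi) ∧ (Z < lo ∨ hi < Z)) ∨
      ((lo < Z ∧ Z < hi) ∧ (W < lo ∨ hi < W)) := by
    rcases hxor with ⟨h1, h2⟩ | ⟨h1, h2⟩
    · left; exact ⟨h1, by omega⟩
    · right; exact ⟨h2, by omega⟩
  have hcross : δ a w + δ b z < δ a b + δ w z := by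
    obtain ⟨hg1, hg2, hg3, hABlohi⟩ := hlohi
    rcases hABlohi with ⟨hAlo, hBhi⟩ | ⟨hAhi, hBlo⟩
    · rcases hsides with ⟨⟨hw1, hw2⟩, hzout⟩ | ⟨⟨hz1, hz2⟩, hwout⟩
      · rcases hzout with hzlt | hzgt
        · obtain ⟨k1, k2⟩ := hK z a w b (flt _ _ (by omega)) (flt _ _ (by omega)) (flt _ _ (by omega))
          linarith [hsym z a, hsym w b, hsym z w, hsym a b, hsym z b, hsym a w]
        · obtain ⟨k1, k2⟩ := hK a w b z (flt _ _ (by omega)) (flt _ _ (by omega)) (flt _ _ (by omega))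
          linarith [hsym a w, hsym b z, hsym a b, hsym w z, hsym a z, hsym w b]
      · rcases hwout with hwlt | hwgt
        · obtain ⟨k1, k2⟩ := hK w a z b (flt _ _ (by omega)) (flt _ _ (by omega)) (flt _ _ (by omega))
          linarith [hsym w a, hsym z b, hsym w z, hsym a b, hsym w b, hsym a z]
        · obtain ⟨k1, k2⟩ := hK a z b w (flt _ _ (by omega)) (flt _ _ (by omega)) (flt _ _ (by omega))
          linarith [hsym a z, hsym b w, hsym a b, hsym z w, hsym a w, hsym z b]
    · rcases hsides with ⟨⟨hw1, hw2⟩, hzout⟩ | ⟨⟨hz1, hz2⟩, hwout⟩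
      · rcases hzout with hzlt | hzgt
        · obtain ⟨k1, k2⟩ := hK z b w a (flt _ _ (by omega)) (flt _ _ (by omega)) (flt _ _ (by omega))
          linarith [hsym z b, hsym w a, hsym z w, hsym b a, hsym z a, hsym b w]
        · obtain ⟨k1, k2⟩ := hK b w a z (flt _ _ (by omega)) (flt _ _ (by omega)) (flt _ _ (by omega))
          linarith [hsym b w, hsym a z, hsym b a, hsym w z, hsym b z, hsym w a]
      · rcases hwout with hwlt | hwgt
        · obtain ⟨k1, k2⟩ := hK w b z a (flt _ _ (by omega)) (flt _ _ (by omega)) (flt _ _ (by omega))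
          linarith [hsym w b, hsym z a, hsym w z, hsym b a, hsym w a, hsym b z]
        · obtain ⟨k1, k2⟩ := hK b z a w (flt _ _ (by omega)) (flt _ _ (by omega)) (flt _ _ (by omega))
          linarith [hsym b z, hsym a w, hsym b a, hsym z w, hsym b w, hsym z a]
  obtain ⟨σ', hσ'⟩ := surgery δ hsym τ m hm2 hmn2 hcross
  exact ⟨σ', by rw [← hτσ]; exact hσ'⟩


end KalmansonAux

/-- if `δ` is a dissimilarity map on `{1,…,n}` satisfying the
strict Kalmanson conditions for the identity circular ordering, and `σ` is a
permutation whose circular ordering is not the identity circular ordering up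
to rotation and reflection, then the tour of `σ` is strictly longer than the
identity tour:  `Σ_i δ(σ(i),σ(i+1)) > Σ_i δ(i,i+1)` (indices cyclic). -/
theorem identity_tour_unique_optimum {n : ℕ} [NeZero n]
    (δ : Fin n → Fin n → ℝ) (hdis : IsDissimilarity δ)
    (hK : StrictKalmanson δ) (σ : Equiv.Perm (Fin n))
    (hσ : ¬ DihedrallyIdentity σ) :
    ∑ i : Fin n, δ (σ i) (σ (i + 1)) > ∑ i : Fin n, δ i (i + 1) := by
  obtain ⟨hsym, hnonneg, hzero⟩ := hdis
  obtain ⟨μ, -, hμ⟩ := Finset.exists_min_image (Finset.univ : Finset (Equiv.Perm (Fin n)))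
    (fun ρ => tL δ ⇑ρ) ⟨1, Finset.mem_univ 1⟩
  have hμd : DihedrallyIdentity μ := by
    by_contra hc
    obtain ⟨μ', hlt⟩ := exists_better δ hsym hK μ hc
    exact absurd (hμ μ' (Finset.mem_univ _)) (not_le.mpr hlt)
  have hμid : tL δ ⇑μ = ∑ i : Fin n, δ i (i + 1) := tL_dihedral δ hsym μ hμd
  obtain ⟨σ', hσ'⟩ := exists_better δ hsym hK σ hσ
  have h1 : tL δ ⇑μ ≤ tL δ ⇑σ' := hμ σ' (Finset.mem_univ _)
  have h2 : (∑ i : Fin n, δ i (i + 1)) < tL δ ⇑σ := by rw [← hμid]; linarith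
  exact h2
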